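/- Let O_1, …, O_n be pairwise incomparable valuation subrings of a field K and let R = O_1 ∩ ⋯ ∩ O_n. Then every finitely generated R-submodule of K (where K is viewed as an R-module) is generated by a single element. -/

import Mathlib

open Polynomial IntermediateField

namespace MultiVal

variable {K : Type*} [Field K]

noncomputable def zlift (p D : ℕ) (g : Polynomial (ZMod p)) : Polynomial ℤ :=
  ∑ m ∈ Finset.range D, C ((g.coeff m).val : ℤ) * X ^ m

lemma zlift_natDegree_lt {p D : ℕ} (hD : 0 < D) (g : Polynomial (ZMod p)) :
    (zlift p D g).natDegree < D := by
  have h := Polynomial.natDegree_sum_le_of_forall_le (Finset.range D)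
      (fun m => C ((g.coeff m).val : ℤ) * X ^ m) (n := D - 1) ?_
  · exact lt_of_le_of_lt h (Nat.pred_lt hD.ne')
  · intro m hm
    exact le_trans (natDegree_C_mul_X_pow_le _ _) (Nat.le_pred_of_lt (Finset.mem_range.mp hm))

lemma zlift_map {p D : ℕ} [Fact p.Prime] (g : Polynomial (ZMod p)) (hg : g.natDegree < D) :
    (zlift p D g).map (Int.castRingHom (ZMod p)) = g := by
  haveI : NeZero p := ⟨(Fact.out : p.Prime).ne_zero⟩
  conv_rhs => rw [g.as_sum_range' D hg]
  rw [zlift, Polynomial.map_sum]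
  refine Finset.sum_congr rfl fun m _ => ?_
  rw [Polynomial.map_mul, Polynomial.map_pow, map_C, map_X]
  congr 1
  rw [← C_mul_X_pow_eq_monomial]
  congr 2
  simp [ZMod.natCast_val, ZMod.cast_id]


lemma crt_poly (D : ℕ) (hD : 0 < D) (P : Finset ℕ) (hP : ∀ p ∈ P, p.Prime)
    (G : (p : ℕ) → Polynomial (ZMod p))
    (hG : ∀ p ∈ P, (G p).Monic ∧ (G p).natDegree = D) :
    ∃ T : Polynomial ℤ, T.Monic ∧ T.natDegree = D ∧
      ∀ p ∈ P, T.map (Int.castRingHom (ZMod p)) = G p := by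
  classical
  induction P using Finset.induction_on with
  | empty => exact ⟨X ^ D, monic_X_pow D, natDegree_X_pow D, fun p hp => absurd hp (by simp)⟩
  | @insert p₀ P hp₀P ih =>
    obtain ⟨T', hT'm, hT'deg, hT'map⟩ :=
      ih (fun p hp => hP p (Finset.mem_insert_of_mem hp))
        (fun p hp => hG p (Finset.mem_insert_of_mem hp))
    haveI : Fact p₀.Prime := ⟨hP p₀ (Finset.mem_insert_self _ _)⟩
    set N : ℕ := ∏ p ∈ P, p with hN
    have hco : N.Coprime p₀ := by
      apply Nat.Coprime.prod_left
      intro p hp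
      exact (Nat.coprime_primes (hP p (Finset.mem_insert_of_mem hp))
        (hP p₀ (Finset.mem_insert_self _ _))).mpr
        (fun h => hp₀P (h ▸ hp))
    set νu : (ZMod p₀)ˣ := ZMod.unitOfCoprime N hco with hνu
    set Δ : Polynomial (ZMod p₀) :=
      C ((νu⁻¹ : (ZMod p₀)ˣ) : ZMod p₀) * (G p₀ - T'.map (Int.castRingHom (ZMod p₀))) with hΔ
    have hmapdeg : (T'.map (Int.castRingHom (ZMod p₀))).natDegree = D :=
      (hT'm.natDegree_map _).trans hT'deg
    have hsubdeg : (G p₀ - T'.map (Int.castRingHom (ZMod p₀))).degree < D := by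
      rcases eq_or_ne (G p₀) (T'.map (Int.castRingHom (ZMod p₀))) with he | hne
      · rw [he, sub_self, degree_zero]
        exact WithBot.bot_lt_coe D
      · have := Polynomial.degree_sub_lt (p := G p₀) (q := T'.map (Int.castRingHom (ZMod p₀)))
          ?_ (hG p₀ (Finset.mem_insert_self _ _)).1.ne_zero ?_
        · refine lt_of_lt_of_le this ?_
          rw [degree_eq_natDegree (hG p₀ (Finset.mem_insert_self _ _)).1.ne_zero,
            (hG p₀ (Finset.mem_insert_self _ _)).2]
        · rw [degree_eq_natDegree (hG p₀ (Finset.mem_insert_self _ _)).1.ne_zero,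
            degree_eq_natDegree (hT'm.map (Int.castRingHom (ZMod p₀))).ne_zero,
            (hG p₀ (Finset.mem_insert_self _ _)).2, hmapdeg]
        · rw [(hG p₀ (Finset.mem_insert_self _ _)).1.leadingCoeff,
            (hT'm.map (Int.castRingHom (ZMod p₀))).leadingCoeff]
    have hΔdeg : Δ.natDegree < D := by
      have h1 : Δ.degree < D := by
        rw [hΔ]
        refine lt_of_le_of_lt (degree_mul_le _ _) ?_
        refine lt_of_le_of_lt (add_le_add degree_C_le le_rfl) ?_
        rw [zero_add]; exact hsubdeg
      rcases eq_or_ne Δ 0 with h | h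
      · rw [h, natDegree_zero]; exact hD
      · rwa [degree_eq_natDegree h, Nat.cast_lt] at h1
    set L : Polynomial ℤ := zlift p₀ D Δ with hL
    refine ⟨T' + C (N : ℤ) * L, ?_, ?_, ?_⟩
    case _ =>
      -- monic
      apply hT'm.add_of_left
      refine lt_of_le_of_lt (degree_mul_le _ _) ?_
      refine lt_of_le_of_lt (add_le_add degree_C_le (degree_le_natDegree)) ?_
      rw [zero_add, degree_eq_natDegree hT'm.ne_zero, hT'deg, Nat.cast_lt]
      exact lt_of_lt_of_le (zlift_natDegree_lt hD Δ) le_rfl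
    case _ =>
      rw [natDegree_add_eq_left_of_degree_lt, hT'deg]
      refine lt_of_le_of_lt (degree_mul_le _ _) ?_
      refine lt_of_le_of_lt (add_le_add degree_C_le (degree_le_natDegree)) ?_
      rw [zero_add, degree_eq_natDegree hT'm.ne_zero, hT'deg, Nat.cast_lt]
      exact zlift_natDegree_lt hD Δ
    case _ =>
      intro p hp
      rcases Finset.mem_insert.mp hp with rfl | hp'
      · -- p = p₀
        rw [Polynomial.map_add, Polynomial.map_mul, map_C, zlift_map Δ hΔdeg, hΔ]
        simp only [eq_intCast, Int.cast_natCast]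
        have h1 : ((N : ZMod p)) = ↑νu := by
          simp [hνu, ZMod.coe_unitOfCoprime]
        rw [h1, ← mul_assoc, ← C_mul, Units.mul_inv, C_1, one_mul, add_sub_cancel]
      · -- p ∈ P
        haveI : NeZero p := ⟨(hP p (Finset.mem_insert_of_mem hp')).ne_zero⟩
        rw [Polynomial.map_add, Polynomial.map_mul, map_C]
        simp only [eq_intCast, Int.cast_natCast]
        rw [(ZMod.natCast_eq_zero_iff N p).mpr (Finset.dvd_prod_of_mem _ hp'),
          C_0, zero_mul, add_zero]
        exact hT'map p hp'


lemma alg_per {k : Type*} [Field k] {p : ℕ} [Fact p.Prime] [CharP k p] (y : k)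
    (h : ∃ g : (ZMod p)[X], g ≠ 0 ∧ (g.map (ZMod.castHom dvd_rfl k)).eval y = 0) :
    ∃ d, 1 ≤ d ∧ y ^ p ^ d = y := by
  letI : Algebra (ZMod p) k := (ZMod.castHom dvd_rfl k).toAlgebra
  have halg : IsAlgebraic (ZMod p) y := by
    obtain ⟨g, hg0, hg⟩ := h
    exact ⟨g, hg0, by rwa [aeval_def, ← eval_map]⟩
  have hint : IsIntegral (ZMod p) y := halg.isIntegral
  haveI := IntermediateField.adjoin.finiteDimensional hint
  haveI : Finite ((ZMod p)⟮y⟯) := Module.finite_of_finite (ZMod p)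
  haveI : Fintype ((ZMod p)⟮y⟯) := Fintype.ofFinite _
  haveI : CharP ((ZMod p)⟮y⟯) p := charP_of_injective_algebraMap' (ZMod p) (A := (ZMod p)⟮y⟯) p
  obtain ⟨n, hn, hcard⟩ := FiniteField.card ((ZMod p)⟮y⟯) p
  set y' : (ZMod p)⟮y⟯ := IntermediateField.AdjoinSimple.gen (ZMod p) y
  have h1 := FiniteField.pow_card y'
  rw [hcard] at h1
  refine ⟨n, n.2, ?_⟩
  have h2 := congrArg (algebraMap ((ZMod p)⟮y⟯) k) h1
  rwa [map_pow, IntermediateField.AdjoinSimple.algebraMap_gen] at h2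

lemma per_pow {k : Type*} [Monoid k] {p d M : ℕ} (y : k) (h : y ^ p ^ d = y) (hdM : d ∣ M) :
    y ^ p ^ M = y := by
  obtain ⟨m, rfl⟩ := hdM
  induction m with
  | zero => simp
  | succ m ih =>
    have : p ^ (d * (m + 1)) = p ^ (d * m) * p ^ d := by ring
    rw [this, pow_mul, ih, h]

/-- The key smoothing polynomial: a monic integer polynomial `T` of positive degree such that
`T(u)` is a unit in every `O l` containing `u`. -/
theorem exists_T {n : ℕ} (O : Fin n → ValuationSubring K) (u : K) :
    ∃ T : Polynomial ℤ, T.Monic ∧ 1 ≤ T.natDegree ∧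
      ∀ l, ∀ hu : u ∈ O l,
        (O l).valuation (Polynomial.eval₂ (Int.castRingHom K) u T) = 1 := by
  classical
  let k : Fin n → Type _ := fun l => IsLocalRing.ResidueField ↥(O l)
  let y : ∀ l, u ∈ O l → k l := fun l hu => IsLocalRing.residue ↥(O l) ⟨u, hu⟩
  let χ : Fin n → ℕ := fun l => ringChar (k l)
  let Cnd : Fin n → Prop := fun l =>
    ∃ (hu : u ∈ O l) (e : ℕ), 1 ≤ e ∧ y l hu ^ χ l ^ e = y l hu
  let d : Fin n → ℕ := fun l => if h : Cnd l then h.choose_spec.choose else 1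
  have hd_pos : ∀ l, 0 < d l := by
    intro l
    show 0 < if h : Cnd l then h.choose_spec.choose else 1
    split
    · next h => exact h.choose_spec.choose_spec.1
    · exact one_pos
  let M : ℕ := ∏ l, d l
  have hM1 : 0 < M := Finset.prod_pos fun l _ => hd_pos l
  have hdM : ∀ l, d l ∣ M := fun l => Finset.dvd_prod_of_mem d (Finset.mem_univ l)
  let P : Finset ℕ := (Finset.univ.image χ).filter (· ≠ 0)
  have hPprime : ∀ p ∈ P, p.Prime := by
    intro p hp
    rw [Finset.mem_filter, Finset.mem_image] at hp
    obtain ⟨⟨l, _, rfl⟩, hne⟩ := hp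
    rcases CharP.char_is_prime_or_zero (k l) (χ l) with h | h
    · exact h
    · exact absurd h hne
  let D : ℕ := ∏ p ∈ P, p ^ M
  have hD : 0 < D := Finset.prod_pos fun p hp => pow_pos (hPprime p hp).pos M
  have hqD : ∀ p ∈ P, p ^ M ∣ D := fun p hp =>
    Finset.dvd_prod_of_mem (fun p => p ^ M) hp
  let G : (p : ℕ) → Polynomial (ZMod p) :=
    fun p => ((X : Polynomial (ZMod p)) ^ p ^ M - X + 1) ^ (D / p ^ M)
  have hq2 : ∀ p ∈ P, 2 ≤ p ^ M := fun p hp =>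
    le_trans (hPprime p hp).two_le (le_trans (pow_one p).symm.le
      (Nat.pow_le_pow_right (hPprime p hp).pos hM1))
  have hbase : ∀ p ∈ P, ((X : Polynomial (ZMod p)) ^ p ^ M - X + 1).Monic ∧
      ((X : Polynomial (ZMod p)) ^ p ^ M - X + 1).natDegree = p ^ M := by
    intro p hp
    haveI : Fact p.Prime := ⟨hPprime p hp⟩
    have hrw : (X : Polynomial (ZMod p)) ^ p ^ M - X + 1 =
        X ^ p ^ M + (1 - X) := by ring
    have hdlt : (1 - (X : Polynomial (ZMod p))).degree <
        ((X : Polynomial (ZMod p)) ^ p ^ M).degree := by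
      refine lt_of_le_of_lt (Polynomial.degree_sub_le _ _) ?_
      rw [degree_X_pow, Polynomial.degree_one, Polynomial.degree_X,
        max_eq_right (zero_le_one : (0 : WithBot ℕ) ≤ 1)]
      exact_mod_cast lt_of_lt_of_le one_lt_two (hq2 p hp)
    constructor
    · rw [hrw]; exact (monic_X_pow _).add_of_left hdlt
    · rw [hrw, natDegree_add_eq_left_of_degree_lt hdlt, natDegree_X_pow]
  have hG : ∀ p ∈ P, (G p).Monic ∧ (G p).natDegree = D := by
    intro p hp
    haveI : Fact p.Prime := ⟨hPprime p hp⟩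
    refine ⟨((hbase p hp).1).pow _, ?_⟩
    rw [natDegree_pow, (hbase p hp).2, Nat.div_mul_cancel (hqD p hp)]
  obtain ⟨T₀, hT₀m, hT₀deg, hT₀map⟩ := crt_poly D hD P hPprime G hG
  let Nall : ℕ := ∏ p ∈ P, p
  have hNdvd : ∀ p ∈ P, p ∣ Nall := fun p hp => Finset.dvd_prod_of_mem (fun q => q) hp
  have hNpos : 0 < Nall := Finset.prod_pos fun p hp => (hPprime p hp).pos
  -- choose the constant shift avoiding the finitely many bad values at char-zero places
  let Bad : Fin n → Set ℤ := fun l =>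
    {c | ∃ hu : u ∈ O l, χ l = 0 ∧
      Polynomial.eval₂ (Int.castRingHom (k l)) (y l hu) T₀ + ((c * Nall : ℤ) : k l) = 0}
  have hBadfin : (⋃ l, Bad l).Finite := by
    refine Set.finite_iUnion fun l => ?_
    refine Set.Subsingleton.finite ?_
    rintro c₁ ⟨hu, hχ0, h₁⟩ c₂ ⟨_, _, h₂⟩
    haveI : CharP (k l) 0 := by rw [← hχ0]; exact ringChar.charP (k l)
    haveI : CharZero (k l) := CharP.charP_to_charZero (k l)
    have : ((c₁ * Nall : ℤ) : k l) = ((c₂ * Nall : ℤ) : k l) := by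
      have := h₁.trans h₂.symm
      exact add_left_cancel this
    have := Int.cast_injective this
    exact mul_right_cancel₀ (by exact_mod_cast hNpos.ne') this
  obtain ⟨c, hc⟩ := (Set.Finite.infinite_compl hBadfin).nonempty
  refine ⟨T₀ + C (c * Nall : ℤ), ?_, ?_, ?_⟩
  · apply hT₀m.add_of_left
    refine lt_of_le_of_lt degree_C_le ?_
    rw [degree_eq_natDegree hT₀m.ne_zero, hT₀deg]
    exact_mod_cast hD
  · rw [natDegree_add_C, hT₀deg]; exact hD
  · intro l hu
    haveI := (O l).isLocalRing
    let A := ↥(O l)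
    let z : A := ⟨u, hu⟩
    let T : Polynomial ℤ := T₀ + C (c * Nall : ℤ)
    let w : A := Polynomial.eval₂ (Int.castRingHom A) z T
    have hcomp1 : (SubringClass.subtype (O l)).comp (Int.castRingHom A) =
        Int.castRingHom K := RingHom.ext_int _ _
    have hcomp2 : (IsLocalRing.residue A).comp (Int.castRingHom A) =
        Int.castRingHom (k l) := RingHom.ext_int _ _
    have hwK : (w : K) = Polynomial.eval₂ (Int.castRingHom K) u T := by
      show (SubringClass.subtype (O l)) (Polynomial.eval₂ (Int.castRingHom A) z T) = _
      rw [Polynomial.hom_eval₂, hcomp1]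
      rfl
    have hres : IsLocalRing.residue A w =
        Polynomial.eval₂ (Int.castRingHom (k l)) (y l hu) T := by
      show IsLocalRing.residue A (Polynomial.eval₂ (Int.castRingHom A) z T) = _
      rw [Polynomial.hom_eval₂, hcomp2]
    have hresne : IsLocalRing.residue A w ≠ 0 := by
      rw [hres]
      rcases CharP.char_is_prime_or_zero (k l) (χ l) with hp | hχ0
      · -- positive characteristic
        have hpP : χ l ∈ P := by
          rw [Finset.mem_filter, Finset.mem_image]
          exact ⟨⟨l, Finset.mem_univ l, rfl⟩, hp.ne_zero⟩
        haveI : Fact (χ l).Prime := ⟨hp⟩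
        haveI : CharP (k l) (χ l) := ringChar.charP (k l)
        have hfact : Int.castRingHom (k l) =
            (ZMod.castHom dvd_rfl (k l)).comp (Int.castRingHom (ZMod (χ l))) :=
          RingHom.ext_int _ _
        rw [hfact, ← Polynomial.eval₂_map, ← Polynomial.eval_map, Polynomial.map_map]
        have hmapT : T.map ((ZMod.castHom dvd_rfl (k l)).comp (Int.castRingHom (ZMod (χ l)))) =
            (G (χ l)).map (ZMod.castHom dvd_rfl (k l)) := by
          rw [← Polynomial.map_map]
          congr 1
          show (T₀ + C (c * Nall : ℤ)).map (Int.castRingHom (ZMod (χ l))) = G (χ l)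
          rw [Polynomial.map_add, hT₀map (χ l) hpP, Polynomial.map_C]
          have : ((c * Nall : ℤ) : ZMod (χ l)) = 0 := by
            rw [Int.cast_mul, Int.cast_natCast,
              (ZMod.natCast_eq_zero_iff Nall (χ l)).mpr (hNdvd (χ l) hpP),
              mul_zero]
          rw [show (Int.castRingHom (ZMod (χ l))) (c * Nall : ℤ) = 0 from this, C_0, add_zero]
        rw [hmapT]
        -- evaluate the explicit polynomial
        have heval : ((G (χ l)).map (ZMod.castHom dvd_rfl (k l))).eval (y l hu) =
            ((y l hu) ^ (χ l) ^ M - y l hu + 1) ^ (D / (χ l) ^ M) := by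
          show ((((X : Polynomial (ZMod (χ l))) ^ (χ l) ^ M - X + 1) ^ (D / (χ l) ^ M)).map
            (ZMod.castHom dvd_rfl (k l))).eval (y l hu) = _
          rw [Polynomial.map_pow, Polynomial.map_add, Polynomial.map_sub,
            Polynomial.map_pow, Polynomial.map_X, Polynomial.map_one]
          simp [Polynomial.eval_pow]
        rw [heval]
        apply pow_ne_zero
        by_cases hCl : Cnd l
        · have h1 : y l hu ^ χ l ^ d l = y l hu := by
            have := hCl.choose_spec.choose_spec.2
            have hdl : d l = hCl.choose_spec.choose := by
              show (if h : Cnd l then h.choose_spec.choose else 1) = _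
              rw [dif_pos hCl]
            rw [hdl]
            exact this
          have h2 : y l hu ^ (χ l) ^ M = y l hu := per_pow _ h1 (hdM l)
          rw [h2]
          simp
        · intro h0
          apply hCl
          have : ∃ g : (ZMod (χ l))[X], g ≠ 0 ∧
              (g.map (ZMod.castHom dvd_rfl (k l))).eval (y l hu) = 0 := by
            refine ⟨X ^ (χ l) ^ M - X + 1, ((hbase (χ l) hpP).1).ne_zero, ?_⟩
            rw [Polynomial.map_add, Polynomial.map_sub, Polynomial.map_pow,
              Polynomial.map_X, Polynomial.map_one]
            simpa using h0
          obtain ⟨e, he1, he2⟩ := alg_per (y l hu) this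
          exact ⟨hu, e, he1, he2⟩
      · -- characteristic zero
        intro h0
        apply hc
        refine Set.mem_iUnion.mpr ⟨l, ⟨hu, hχ0, ?_⟩⟩
        rw [Polynomial.eval₂_add, Polynomial.eval₂_C] at h0
        exact h0
    have hunit : IsUnit w := by
      by_contra hnu
      have h1 : w ∈ IsLocalRing.maximalIdeal A := by
        rwa [IsLocalRing.mem_maximalIdeal, mem_nonunits_iff]
      exact hresne (Ideal.Quotient.eq_zero_iff_mem.mpr h1)
    have hval := ((O l).valuation_eq_one_iff w).mp hunit
    show (O l).valuation (Polynomial.eval₂ (Int.castRingHom K) u T) = 1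
    rwa [hwK] at hval


lemma tworing (A B : ValuationSubring K) (hBA : ¬ B ≤ A) :
    ∃ u : K, A.valuation u < 1 ∧ B.valuation u = 1 := by
  obtain ⟨b, hbB, hbA⟩ := SetLike.not_le_iff_exists.mp hBA
  have hb0 : b ≠ 0 := by rintro rfl; exact hbA (zero_mem A)
  have hA : 1 < A.valuation b := by
    rw [← A.valuation_le_one_iff] at hbA; exact lt_of_not_ge hbA
  have hBle : B.valuation b ≤ 1 := (B.valuation_le_one_iff b).2 hbB
  rcases eq_or_lt_of_le hBle with heq | hlt
  · exact ⟨b⁻¹, by rwa [← Valuation.one_lt_val_iff _ hb0], by rw [map_inv₀, heq, inv_one]⟩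
  · have hb1 : A.valuation (b + 1) = A.valuation b := by
      rw [Valuation.map_add_eq_of_lt_left]
      · rw [Valuation.map_one]; exact hA
    have hB1 : B.valuation (b + 1) = 1 := by
      rw [add_comm]; exact Valuation.map_one_add_of_lt _ hlt
    have hne : b + 1 ≠ 0 := by
      intro h; rw [h, Valuation.map_zero] at hB1; exact zero_ne_one hB1
    refine ⟨(b + 1)⁻¹, ?_, by rw [map_inv₀, hB1, inv_one]⟩
    rw [← Valuation.one_lt_val_iff _ hne, hb1]; exact hA


/-- The C(j,i) element: an element of the intersection which is in `m_j` and a unit in `O i`. -/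
lemma exists_unit_elt {n : ℕ} (O : Fin n → ValuationSubring K)
    (hincomp : ∀ i j, i ≠ j → ¬ O i ≤ O j) (j i : Fin n) (hji : j ≠ i) :
    ∃ x : K, (∀ l, x ∈ O l) ∧ (O j).valuation x < 1 ∧ (O i).valuation x = 1 := by
  obtain ⟨u, huj, hui⟩ := tworing (O j) (O i) (hincomp i j (Ne.symm hji))
  obtain ⟨T, hTm, hTdeg, hTval⟩ := exists_T O u
  set τ : K := Polynomial.eval₂ (Int.castRingHom K) u T with hτdef
  set D : ℕ := T.natDegree with hDdef
  have hu0 : u ≠ 0 := by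
    intro h; rw [h, Valuation.map_zero] at hui; exact zero_ne_one hui
  set wv : K := ∑ m ∈ Finset.range D, ((T.coeff m : ℤ) : K) * (u⁻¹) ^ (D - m) with hwv
  have hexp : τ = u ^ D * (1 + wv) := by
    rw [hτdef, Polynomial.eval₂_eq_sum_range]
    rw [Finset.sum_range_succ]
    have hcD : (Int.castRingHom K) (T.coeff D) = 1 := by
      rw [hDdef, hTm.coeff_natDegree]; exact map_one _
    rw [hcD, one_mul, mul_add, mul_one, hwv, Finset.mul_sum, add_comm]
    congr 1
    refine Finset.sum_congr rfl fun m hm => ?_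
    have hmD : m ≤ D := le_of_lt (Finset.mem_range.mp hm)
    have : u ^ D * (u⁻¹) ^ (D - m) = u ^ m := by
      rw [inv_pow, ← pow_sub₀ u hu0 (Nat.sub_le D m), Nat.sub_sub_self hmD]
    rw [mul_comm (((T.coeff m : ℤ) : K)) _, ← mul_assoc, this, mul_comm]
    rfl
  set x : K := u ^ D * τ⁻¹ with hx
  have hvx : ∀ l, u ∈ O l → (O l).valuation x = ((O l).valuation u) ^ D := by
    intro l hul
    rw [hx, Valuation.map_mul, map_inv₀, Valuation.map_pow, hTval l hul, inv_one, mul_one]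
  have hvx' : ∀ l, u ∉ O l → (O l).valuation x = 1 := by
    intro l hul
    have hvu : 1 < (O l).valuation u := by
      rw [← (O l).valuation_le_one_iff] at hul; exact lt_of_not_ge hul
    have hvui : (O l).valuation u⁻¹ < 1 := (Valuation.one_lt_val_iff _ hu0).mp hvu
    have hwlt : (O l).valuation wv < 1 := by
      rw [hwv]
      refine Valuation.map_sum_lt _ one_ne_zero fun m hm => ?_
      rw [Valuation.map_mul, Valuation.map_pow]
      have h1 : (O l).valuation ((T.coeff m : ℤ) : K) ≤ 1 := by
        rw [(O l).valuation_le_one_iff]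
        exact intCast_mem (O l) (T.coeff m)
      have h2 : ((O l).valuation u⁻¹) ^ (D - m) < 1 := by
        refine pow_lt_one₀ zero_le' hvui ?_
        have := Finset.mem_range.mp hm
        omega
      calc (O l).valuation ((T.coeff m : ℤ) : K) * ((O l).valuation u⁻¹) ^ (D - m)
          ≤ 1 * ((O l).valuation u⁻¹) ^ (D - m) := mul_le_mul_left h1 _
        _ = ((O l).valuation u⁻¹) ^ (D - m) := one_mul _
        _ < 1 := h2
    have hone : (O l).valuation (1 + wv) = 1 := Valuation.map_one_add_of_lt _ hwlt
    have hwne : (1 : K) + wv ≠ 0 := by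
      intro h; rw [h, Valuation.map_zero] at hone; exact zero_ne_one hone
    have hxeq : x = (1 + wv)⁻¹ := by
      rw [hx, hexp, mul_inv, ← mul_assoc, mul_inv_cancel₀ (pow_ne_zero D hu0), one_mul]
    rw [hxeq, map_inv₀, hone, inv_one]
  have humem : ∀ l, u ∈ O l → x ∈ O l := by
    intro l hul
    rw [← (O l).valuation_le_one_iff, hvx l hul]
    exact pow_le_one' ((O l).valuation_le_one_iff u |>.mpr hul) D
  refine ⟨x, ?_, ?_, ?_⟩
  · intro l
    by_cases hul : u ∈ O l
    · exact humem l hul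
    · rw [← (O l).valuation_le_one_iff, hvx' l hul]
  · have huj' : u ∈ O j := (O j).valuation_le_one_iff u |>.mp huj.le
    rw [hvx j huj']
    exact pow_lt_one₀ zero_le' huj (by omega)
  · have hui' : u ∈ O i := (O i).valuation_le_one_iff u |>.mp hui.le
    rw [hvx i hui', hui, one_pow]

/-- Approximation: an element of the intersection lying in `m_j` and a unit in all other `O i`. -/
lemma exists_elt_all {n : ℕ} (O : Fin n → ValuationSubring K)
    (hincomp : ∀ i j, i ≠ j → ¬ O i ≤ O j) (R₀ : Subring K)
    (hmem : ∀ x : K, x ∈ R₀ ↔ ∀ l, x ∈ O l) (j : Fin n) :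
    ∃ x : K, x ∈ R₀ ∧ (O j).valuation x < 1 ∧ ∀ i, i ≠ j → (O i).valuation x = 1 := by
  classical
  let φ : ∀ i : Fin n, ↥R₀ →+* ↥(O i) := fun i =>
    { toFun := fun r => ⟨r.1, (hmem r.1).1 r.2 i⟩
      map_one' := rfl
      map_mul' := fun _ _ => rfl
      map_zero' := rfl
      map_add' := fun _ _ => rfl }
  let p : Fin n → Ideal ↥R₀ := fun i => (IsLocalRing.maximalIdeal ↥(O i)).comap (φ i)
  have hprime : ∀ i, (p i).IsPrime := fun i => Ideal.IsPrime.comap _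
  have mem_p : ∀ (i : Fin n) (r : ↥R₀), r ∈ p i ↔ (O i).valuation r.1 < 1 := by
    intro i r
    show φ i r ∈ IsLocalRing.maximalIdeal ↥(O i) ↔ _
    rw [(O i).valuation_lt_one_iff (φ i r)]
    exact Iff.rfl
  have hnotle : ∀ i, i ≠ j → ¬ (p j ≤ p i) := by
    intro i hij hle
    obtain ⟨x, hxall, hxj, hxi⟩ := exists_unit_elt O hincomp j i (Ne.symm hij)
    have hxR : x ∈ R₀ := (hmem x).2 hxall
    have h1 : (⟨x, hxR⟩ : ↥R₀) ∈ p j := (mem_p j _).mpr hxj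
    have h2 := (mem_p i _).mp (hle h1)
    rw [hxi] at h2
    exact lt_irrefl 1 h2
  have hsub : ¬ ((p j : Set ↥R₀) ⊆
      ⋃ i ∈ ((Finset.univ.erase j : Finset (Fin n)) : Set (Fin n)), (p i : Set ↥R₀)) := by
    intro hsubset
    obtain ⟨i, hi_mem, hle⟩ :=
      (Ideal.subset_union_prime j j (fun i _ _ _ => hprime i)).mp hsubset
    exact hnotle i (Finset.mem_erase.mp hi_mem).1 hle
  obtain ⟨r, hrj, hrn⟩ := Set.not_subset.mp hsub
  refine ⟨r.1, r.2, (mem_p j r).mp hrj, ?_⟩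
  intro i hij
  have hri : r ∉ p i := by
    intro hri
    exact hrn (Set.mem_biUnion (by simpa using Finset.mem_erase.mpr ⟨hij, Finset.mem_univ i⟩) hri)
  have hle1 : (O i).valuation r.1 ≤ 1 := (O i).valuation_le_one_iff _ |>.mpr ((hmem r.1).1 r.2 i)
  rcases lt_or_eq_of_le hle1 with h | h
  · exact absurd ((mem_p i r).mpr h) hri
  · exact h

/-- The element `β` used in the main construction. -/
lemma exists_beta {n : ℕ} (O : Fin n → ValuationSubring K)
    (hincomp : ∀ i j, i ≠ j → ¬ O i ≤ O j) (R₀ : Subring K)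
    (hmem : ∀ x : K, x ∈ R₀ ↔ ∀ l, x ∈ O l) (t : K) :
    ∃ β : K, β ∈ R₀ ∧ (∀ l, (O l).valuation t = 1 → (O l).valuation β < 1) ∧
      (∀ l, t ∉ O l → (O l).valuation β = 1) := by
  classical
  choose βf hβR hβlt hβeq using fun j => exists_elt_all O hincomp R₀ hmem j
  set A : Finset (Fin n) := Finset.univ.filter (fun l => (O l).valuation t = 1) with hA
  refine ⟨∏ j ∈ A, βf j, Subring.prod_mem R₀ (fun j _ => hβR j), ?_, ?_⟩
  · intro l hl
    have hlA : l ∈ A := by rw [hA, Finset.mem_filter]; exact ⟨Finset.mem_univ l, hl⟩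
    rw [← Finset.mul_prod_erase A βf hlA, Valuation.map_mul]
    have hrest : (O l).valuation (∏ j ∈ A.erase l, βf j) = 1 := by
      rw [map_prod]
      refine Finset.prod_eq_one fun j hj => ?_
      exact hβeq j l (Finset.mem_erase.mp hj).1.symm
    rw [hrest, mul_one]
    exact hβlt l
  · intro l hl
    have hlA : l ∉ A := by
      rw [hA, Finset.mem_filter]
      rintro ⟨-, hv⟩
      exact hl (((O l).valuation_le_one_iff t).mp hv.le)
    rw [map_prod]
    refine Finset.prod_eq_one fun j hj => ?_
    exact hβeq j l (fun h => hlA (by rw [h]; exact hj))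

/-- Core lemma: the `gcd`-type element `s` for the pair `(1, t)`. -/
lemma core {n : ℕ} (O : Fin n → ValuationSubring K)
    (hincomp : ∀ i j, i ≠ j → ¬ O i ≤ O j) (R₀ : Subring K)
    (hmem : ∀ x : K, x ∈ R₀ ↔ ∀ l, x ∈ O l) (t : K) :
    ∃ s : K, s ≠ 0 ∧ (∃ α β : K, α ∈ R₀ ∧ β ∈ R₀ ∧ s = α + β * t) ∧
      s⁻¹ ∈ R₀ ∧ t * s⁻¹ ∈ R₀ := by
  by_cases hT : ∀ l, t ∈ O l
  · refine ⟨1, one_ne_zero, ⟨1, 0, one_mem R₀, zero_mem R₀, by ring⟩, ?_, ?_⟩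
    · rw [inv_one]; exact one_mem R₀
    · rw [inv_one, mul_one]; exact (hmem t).2 hT
  · push_neg at hT
    obtain ⟨l₀, hl₀⟩ := hT
    have ht0 : t ≠ 0 := fun h => hl₀ (h ▸ zero_mem (O l₀))
    obtain ⟨β, hβR, hβlt, hβeq⟩ := exists_beta O hincomp R₀ hmem t
    set s : K := 1 + β * t with hs
    have hcase : ∀ l, (t ∈ O l → (O l).valuation s = 1) ∧
        (t ∉ O l → (O l).valuation s = (O l).valuation t) := by
      intro l
      constructor
      · intro htl
        have hvt : (O l).valuation t ≤ 1 := ((O l).valuation_le_one_iff t).mpr htl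
        have hβt : (O l).valuation (β * t) < 1 := by
          rw [Valuation.map_mul]
          rcases lt_or_eq_of_le hvt with hlt | heq
          · calc (O l).valuation β * (O l).valuation t
                ≤ 1 * (O l).valuation t :=
                  mul_le_mul_left (((O l).valuation_le_one_iff β).mpr ((hmem β).1 hβR l)) _
            _ = (O l).valuation t := one_mul _
            _ < 1 := hlt
          · rw [heq, mul_one]
            exact hβlt l heq
        rw [hs]
        exact Valuation.map_one_add_of_lt _ hβt
      · intro htl
        have hvt : 1 < (O l).valuation t := by
          rw [← (O l).valuation_le_one_iff] at htl; exact lt_of_not_ge htl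
        have hβ1 : (O l).valuation β = 1 := hβeq l htl
        have hβt : (O l).valuation (β * t) = (O l).valuation t := by
          rw [Valuation.map_mul, hβ1, one_mul]
        rw [hs, Valuation.map_add_eq_of_lt_right _ (by rw [hβt, Valuation.map_one]; exact hvt),
          hβt]
    have hs0 : s ≠ 0 := by
      intro h
      have := (hcase l₀).2 hl₀
      rw [h, Valuation.map_zero] at this
      exact ht0 ((Valuation.zero_iff _).mp this.symm)
    refine ⟨s, hs0, ⟨1, β, one_mem R₀, hβR, by rw [hs]⟩, ?_, ?_⟩
    · rw [hmem]
      intro l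
      rw [← (O l).valuation_le_one_iff, map_inv₀]
      by_cases htl : t ∈ O l
      · rw [(hcase l).1 htl, inv_one]
      · rw [(hcase l).2 htl]
        have hvt : 1 < (O l).valuation t := by
          rw [← (O l).valuation_le_one_iff] at htl; exact lt_of_not_ge htl
        exact le_of_lt ((Valuation.one_lt_val_iff _ ht0).mp hvt)
    · rw [hmem]
      intro l
      rw [← (O l).valuation_le_one_iff, Valuation.map_mul, map_inv₀]
      by_cases htl : t ∈ O l
      · rw [(hcase l).1 htl, inv_one, mul_one]
        exact ((O l).valuation_le_one_iff t).mpr htl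
      · rw [(hcase l).2 htl, mul_inv_cancel₀]
        intro h
        exact ht0 ((Valuation.zero_iff _).mp h)


lemma span_pair {n : ℕ} (O : Fin n → ValuationSubring K)
    (hincomp : ∀ i j, i ≠ j → ¬ O i ≤ O j) (R₀ : Subring K)
    (hmem : ∀ x : K, x ∈ R₀ ↔ ∀ l, x ∈ O l) (a b : K) :
    ∃ c : K, Submodule.span ↥R₀ {a, b} = Submodule.span ↥R₀ {c} := by
  rcases eq_or_ne b 0 with rfl | hb
  · refine ⟨a, le_antisymm (Submodule.span_le.2 ?_) (Submodule.span_le.2 ?_)⟩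
    · rintro z hz
      rcases (by simpa using hz : z = a ∨ z = 0) with rfl | rfl
      · exact Submodule.subset_span rfl
      · exact Submodule.zero_mem _
    · rintro z hz
      rcases (by simpa using hz : z = a) with rfl
      exact Submodule.subset_span (Set.mem_insert _ _)
  · obtain ⟨s, hs0, ⟨α, β, hα, hβ, hsab⟩, hsi, htsi⟩ := core O hincomp R₀ hmem (a * b⁻¹)
    have hbmem : b ∈ Submodule.span ↥R₀ ({s * b} : Set K) := by
      rw [Submodule.mem_span_singleton]
      refine ⟨⟨s⁻¹, hsi⟩, ?_⟩
      show s⁻¹ * (s * b) = b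
      rw [← mul_assoc, inv_mul_cancel₀ hs0, one_mul]
    have hamem : a ∈ Submodule.span ↥R₀ ({s * b} : Set K) := by
      rw [Submodule.mem_span_singleton]
      refine ⟨⟨a * b⁻¹ * s⁻¹, htsi⟩, ?_⟩
      show a * b⁻¹ * s⁻¹ * (s * b) = a
      have h : a * b⁻¹ * s⁻¹ * (s * b) = a * (b⁻¹ * b) * (s⁻¹ * s) := by ring
      rw [h, inv_mul_cancel₀ hb, inv_mul_cancel₀ hs0, mul_one, mul_one]
    refine ⟨s * b, le_antisymm (Submodule.span_le.2 ?_) (Submodule.span_le.2 ?_)⟩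
    · rintro z hz
      rcases (by simpa using hz : z = a ∨ z = b) with rfl | rfl
      · exact hamem
      · exact hbmem
    · rintro z hz
      rcases (by simpa using hz : z = s * b) with rfl
      rw [SetLike.mem_coe, Submodule.mem_span_pair]
      refine ⟨⟨β, hβ⟩, ⟨α, hα⟩, ?_⟩
      show β * a + α * b = s * b
      have h : (α + β * (a * b⁻¹)) * b = α * b + β * a * (b⁻¹ * b) := by ring
      rw [hsab, h, inv_mul_cancel₀ hb, mul_one]
      ring

end MultiVal

/-- Let `O_1, …, O_n` be pairwise incomparable valuation subrings of a field `K` and let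
`R = O_1 ∩ ⋯ ∩ O_n`.  Then every finitely generated `R`-submodule of `K` is generated by
a single element. -/
theorem finitely_generated_submodule_of_multiValuationRing_is_principal
    {K : Type*} [Field K] (n : ℕ) (hn : 0 < n)
    (O : Fin n → ValuationSubring K)
    (hincomp : ∀ i j, i ≠ j → ¬ O i ≤ O j)
    (R : Subring K) (hR : R = ⨅ i, (O i).toSubring)
    (M : Submodule ↥R K) (hM : M.FG) :
    ∃ a : K, M = Submodule.span ↥R {a} := by
  subst hR
  have hmem : ∀ x : K, x ∈ (⨅ i, (O i).toSubring) ↔ ∀ l, x ∈ O l := by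
    intro x
    rw [Subring.mem_iInf]
    exact Iff.rfl
  obtain ⟨S, hS⟩ := hM
  suffices h : ∀ S : Finset K, ∃ a : K,
      Submodule.span ↥(⨅ i, (O i).toSubring) (S : Set K) =
        Submodule.span ↥(⨅ i, (O i).toSubring) {a} by
    obtain ⟨a, ha⟩ := h S
    exact ⟨a, by rw [← hS, ha]⟩
  intro S
  classical
  induction S using Finset.induction_on with
  | empty =>
    refine ⟨0, ?_⟩
    rw [Finset.coe_empty, Submodule.span_empty, Submodule.span_zero_singleton]
  | @insert b S hbS ih =>
    obtain ⟨a, ha⟩ := ih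
    obtain ⟨c, hc⟩ := MultiVal.span_pair O hincomp _ hmem b a
    refine ⟨c, ?_⟩
    rw [Finset.coe_insert, Submodule.span_insert, ha, ← Submodule.span_insert, ← hc]
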